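/- Let G be an abelian group, let n ≥ 1, and let A = (a_1, …, a_N) be a sequence in G whose entries are linearly independent over ℤ (i.e. the only integer relation c_1·a_1 + ⋯ + c_N·a_N = 0 with c_i ∈ ℤ is the trivial one). Suppose there exists an n-coloring of the edges of the complete graph on vertex set {1, …, N+1} with no monochromatic triangle. Then the set Â of block sums of A can be covered by n sumfree subsets of G (i.e. sd(Â) ≤ n). -/

import Mathlib

/-- A subset `S` of an abelian group is sumfree if there are no `x, y, z ∈ S`
with `x + y = z` (here `x = y` is allowed). -/
def Sumfree {G : Type*} [AddCommGroup G] (S : Set G) : Prop :=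
  ∀ x ∈ S, ∀ y ∈ S, x + y ∉ S

/-- `B` is a block of `A`: a nonempty consecutive subsequence. -/
def IsBlock {G : Type*} (B A : List G) : Prop :=
  B ≠ [] ∧ ∃ L R : List G, A = L ++ B ++ R

/-- The set of block sums of the finite sequence `A`. -/
def blockSums {G : Type*} [AddCommGroup G] (A : List G) : Set G :=
  {s | ∃ B : List G, IsBlock B A ∧ B.sum = s}

/-- `X` can be covered by `n` sumfree subsets. -/
def CoveredBySumfree {G : Type*} [AddCommGroup G] (n : ℕ) (X : Set G) : Prop :=
  ∃ C : Fin n → Set G, (∀ i, Sumfree (C i)) ∧ X ⊆ ⋃ i, C i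

/-- Interval combinatorics: if two nonempty intervals are disjoint and their
union is an interval, they are adjacent. -/
lemma interval_lemma (i1 m1 i2 m2 i3 m3 : ℕ) (h1 : i1 < m1) (h2 : i2 < m2) (h3 : i3 < m3)
    (H : ∀ t, ((i3 ≤ t ∧ t < m3) ↔ ((i1 ≤ t ∧ t < m1) ∨ (i2 ≤ t ∧ t < m2))) ∧
      ¬((i1 ≤ t ∧ t < m1) ∧ (i2 ≤ t ∧ t < m2))) :
    (m1 = i2 ∧ i3 = i1 ∧ m3 = m2) ∨ (m2 = i1 ∧ i3 = i2 ∧ m3 = m1) := by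
  have A1 := H i1; have A2 := H i2; have A3 := H i3
  have A4 := H m1; have A5 := H m2; have A6 := H (max i1 i2)
  have A7 := H (m3 - 1); have A8 := H (m1 - 1); have A9 := H (m2 - 1)
  have A10 := H (min i1 i2); have A11 := H (max m1 m2 - 1)
  omega

lemma sumTake {G : Type*} [AddCommGroup G] {N : ℕ} (A : Fin N → G) :
    ∀ m, m ≤ N → ((List.ofFn A).take m).sum =
      ∑ k ∈ Finset.range m, if h : k < N then A ⟨k, h⟩ else 0 := by
  intro m
  induction m with
  | zero => simp
  | succ m ih =>
    intro hm
    have hmN : m < N := hm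
    rw [List.take_succ, Finset.sum_range_succ, List.sum_append, ih (by omega)]
    simp [List.getElem?_ofFn, hmN]

lemma blockSums_eq {G : Type*} [AddCommGroup G] {N : ℕ} (A : Fin N → G) :
    blockSums (List.ofFn A) = {s | ∃ i m, i < m ∧ m ≤ N ∧
      s = ((List.ofFn A).take m).sum - ((List.ofFn A).take i).sum} := by
  ext s
  constructor
  · rintro ⟨B, ⟨hB, L, R, hLR⟩, rfl⟩
    have hlen : N = L.length + B.length + R.length := by
      have := congrArg List.length hLR
      simp [List.length_append] at this
      omega
    refine ⟨L.length, L.length + B.length, ?_, by omega, ?_⟩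
    · have : B.length ≠ 0 := fun h => hB (List.length_eq_zero_iff.mp h)
      omega
    · have h1 : (List.ofFn A).take (L.length + B.length) = L ++ B := by
        rw [hLR]
        simpa [List.length_append] using List.take_left (l₁ := L ++ B) (l₂ := R)
      have h2 : (List.ofFn A).take L.length = L := by
        rw [hLR, List.append_assoc]
        exact List.take_left
      rw [h1, h2, List.sum_append]
      abel
  · rintro ⟨i, m, him, hm, rfl⟩
    set l := List.ofFn A with hl
    refine ⟨(l.drop i).take (m - i), ⟨?_, l.take i, l.drop m, ?_⟩, ?_⟩
    · intro h
      have := congrArg List.length h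
      simp [List.length_take, List.length_drop, hl] at this
      omega
    · have h1 : l.take i ++ (l.drop i).take (m - i) = l.take m := by
        rw [← List.take_add]
        congr 1
        omega
      rw [h1, List.take_append_drop]
    · have h1 : l.take i ++ (l.drop i).take (m - i) = l.take m := by
        rw [← List.take_add]
        congr 1
        omega
      have h2 : (l.take m).sum = (l.take i).sum + ((l.drop i).take (m - i)).sum := by
        rw [← h1, List.sum_append]
      rw [h2]
      abel

/-- If the entries of `A = (a_1, …, a_N)` are linearly independent over `ℤ` and
there is an `n`-coloring of the edges of the complete graph on `{1, …, N+1}`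
with no monochromatic triangle, then `Â` can be covered by `n` sumfree subsets. -/
theorem coveredBySumfree_of_linearIndependent {G : Type*} [AddCommGroup G]
    (n N : ℕ) (hn : 1 ≤ n) (A : Fin N → G) (hli : LinearIndependent ℤ A)
    (hχ : ∃ χ : ℕ → ℕ → Fin n, ∀ i j k : ℕ,
      1 ≤ i → i < j → j < k → k ≤ N + 1 → ¬(χ i j = χ j k ∧ χ i j = χ i k)) :
    CoveredBySumfree n (blockSums (List.ofFn A)) := by
  obtain ⟨χ, hχ⟩ := hχ
  set S : ℕ → G := fun m => ((List.ofFn A).take m).sum with hS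
  -- interval sums
  have hIco : ∀ i m : ℕ, i ≤ m → m ≤ N →
      S m - S i = ∑ k ∈ Finset.Ico i m, (if h : k < N then A ⟨k, h⟩ else 0) := by
    intro i m him hm
    rw [hS]
    simp only
    rw [sumTake A m hm, sumTake A i (le_trans him hm),
      Finset.sum_Ico_eq_sub _ him]
  have hsum : ∀ i m : ℕ, i ≤ m → m ≤ N →
      ∑ t : Fin N, (if i ≤ (t : ℕ) ∧ (t : ℕ) < m then (1 : ℤ) else 0) • A t = S m - S i := by
    intro i m him hm
    rw [hIco i m him hm]
    have step1 : ∀ t : Fin N,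
        (if i ≤ (t : ℕ) ∧ (t : ℕ) < m then (1 : ℤ) else 0) • A t =
        (fun k : ℕ => (if i ≤ k ∧ k < m then (1 : ℤ) else 0) •
          (if h : k < N then A ⟨k, h⟩ else 0)) (t : ℕ) := by
      intro t
      simp [t.isLt]
    rw [Finset.sum_congr rfl (fun t _ => step1 t),
      Fin.sum_univ_eq_sum_range (fun k : ℕ => (if i ≤ k ∧ k < m then (1 : ℤ) else 0) •
          (if h : k < N then A ⟨k, h⟩ else 0)) N]
    simp only [ite_smul, one_smul, zero_smul]
    rw [← Finset.sum_filter]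
    congr 1
    ext k
    simp only [Finset.mem_filter, Finset.mem_range, Finset.mem_Ico]
    omega
  refine ⟨fun c => {s | ∃ i m, i < m ∧ m ≤ N ∧ s = S m - S i ∧ χ (i + 1) (m + 1) = c},
    ?_, ?_⟩
  · -- sumfree
    rintro c x ⟨i1, m1, h1, hm1, hx, hc1⟩ y ⟨i2, m2, h2, hm2, hy, hc2⟩
      ⟨i3, m3, h3, hm3, hxy, hc3⟩
    -- the integer relation
    have heq : (∑ t : Fin N, ((if i1 ≤ (t : ℕ) ∧ (t : ℕ) < m1 then (1 : ℤ) else 0) +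
        (if i2 ≤ (t : ℕ) ∧ (t : ℕ) < m2 then (1 : ℤ) else 0) -
        (if i3 ≤ (t : ℕ) ∧ (t : ℕ) < m3 then (1 : ℤ) else 0)) • A t) = 0 := by
      simp only [sub_smul, add_smul, Finset.sum_sub_distrib, Finset.sum_add_distrib]
      rw [hsum i1 m1 h1.le hm1, hsum i2 m2 h2.le hm2, hsum i3 m3 h3.le hm3,
        ← hx, ← hy, ← hxy]
      abel
    have hg0 := Fintype.linearIndependent_iff.mp hli _ heq
    have H : ∀ t : ℕ, ((i3 ≤ t ∧ t < m3) ↔ ((i1 ≤ t ∧ t < m1) ∨ (i2 ≤ t ∧ t < m2))) ∧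
        ¬((i1 ≤ t ∧ t < m1) ∧ (i2 ≤ t ∧ t < m2)) := by
      intro t
      by_cases ht : t < N
      · have e := hg0 ⟨t, ht⟩
        simp only at e
        split_ifs at e <;> omega
      · omega
    rcases interval_lemma i1 m1 i2 m2 i3 m3 h1 h2 h3 H with
      ⟨e1, e2, e3⟩ | ⟨e1, e2, e3⟩
    · exact hχ (i1 + 1) (m1 + 1) (m2 + 1) (by omega) (by omega) (by omega) (by omega)
        ⟨by rw [hc1, e1, hc2], by rw [hc1, ← e2, ← e3, hc3]⟩
    · exact hχ (i2 + 1) (m2 + 1) (m1 + 1) (by omega) (by omega) (by omega) (by omega)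
        ⟨by rw [hc2, e1, hc1], by rw [hc2, ← e2, ← e3, hc3]⟩
  · -- coverage
    intro s hs
    rw [blockSums_eq A] at hs
    obtain ⟨i, m, him, hm, rfl⟩ := hs
    exact Set.mem_iUnion.mpr ⟨χ (i + 1) (m + 1), i, m, him, hm, rfl, rfl⟩
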